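/- In the 3-player cyclic quadratic network game with interaction weight γ ∈ (0,1) and conjectured shocks ε^{(1)}=(β,1,1), ε^{(2)}=(1,β,1), ε^{(3)}=(1,1,β) for β ∈ (0,1), the game-to-real gap of each player equals γ(γ² + γ + β)(1-β)(1-γ²)/(1-γ³)², which is strictly positive. -/

import Mathlib

set_option maxHeartbeats 1000000
open Matrix

/-- Cost of player `i` in a scalar-action quadratic network game on `Fin 3`. -/
noncomputable def J3 (P : Matrix (Fin 3) (Fin 3) ℝ) (ε : Fin 3 → ℝ) (i : Fin 3)
    (u : Fin 3 → ℝ) : ℝ :=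
  (1 / 2) * u i ^ 2 - u i * (P.mulVec u i + ε i)

/-- in the 3-player cyclic quadratic network game with weight
`γ ∈ (0,1)` and conjectured shocks `ε⁽ⁱ⁾` equal to `1` everywhere except `β ∈ (0,1)`
at coordinate `i`, the game-to-real gap of each player equals
`γ(γ² + γ + β)(1-β)(1-γ²)/(1-γ³)²`, which is strictly positive. -/
theorem cyclic_game_gap (γ β : ℝ) (hγ : γ ∈ Set.Ioo (0 : ℝ) 1)
    (hβ : β ∈ Set.Ioo (0 : ℝ) 1)
    (P : Matrix (Fin 3) (Fin 3) ℝ) (hP : P = !![0, 0, γ; γ, 0, 0; 0, γ, 0])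
    (ε : Fin 3 → Fin 3 → ℝ) (hε : ∀ i j : Fin 3, ε i j = if j = i then β else 1)
    (upred : Fin 3 → Fin 3 → ℝ) (hupred : ∀ i, upred i = (1 - P)⁻¹.mulVec (ε i))
    (ureal : Fin 3 → ℝ) (hureal : ∀ i, ureal i = upred i i) :
    ∀ i : Fin 3,
      J3 P (ε i) i ureal - J3 P (ε i) i (upred i) =
        γ * (γ ^ 2 + γ + β) * (1 - β) * (1 - γ ^ 2) / (1 - γ ^ 3) ^ 2 ∧
      0 < J3 P (ε i) i ureal - J3 P (ε i) i (upred i) := by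
  obtain ⟨hγ0, hγ1⟩ := hγ
  obtain ⟨hβ0, hβ1⟩ := hβ
  have hd : (1 : ℝ) - γ ^ 3 ≠ 0 := by nlinarith [pow_lt_one₀ (le_of_lt hγ0) hγ1 (by norm_num : 3 ≠ 0)]
  set M : Matrix (Fin 3) (Fin 3) ℝ := !![1, γ^2, γ; γ, 1, γ^2; γ^2, γ, 1] with hM
  have hinv : (1 - P)⁻¹ = (1 / (1 - γ ^ 3)) • M := by
    apply Matrix.inv_eq_right_inv
    subst hP
    ext i j
    fin_cases i <;> fin_cases j <;>
      simp [hM, Matrix.mul_apply, Fin.sum_univ_three, Matrix.one_apply, Matrix.sub_apply] <;>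
      field_simp <;> ring
  have hval : ∀ i j : Fin 3, upred i j =
      (1 / (1 - γ ^ 3)) * (M j 0 * ε i 0 + M j 1 * ε i 1 + M j 2 * ε i 2) := by
    intro i j
    rw [hupred, hinv]
    simp [Matrix.mulVec, dotProduct, Fin.sum_univ_three, Matrix.smul_apply, smul_eq_mul]
    ring
  have hA : ∀ i : Fin 3, upred i i = (β + γ + γ ^ 2) / (1 - γ ^ 3) := by
    intro i
    fin_cases i <;>
    · rw [hval]
      simp [hM, hε]
      field_simp
      ring
  have hB0 : upred 0 2 = (1 + γ + γ ^ 2 * β) / (1 - γ ^ 3) := by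
    rw [hval]; simp [hM, hε]; field_simp; ring
  have hB1 : upred 1 0 = (1 + γ + γ ^ 2 * β) / (1 - γ ^ 3) := by
    rw [hval]; simp [hM, hε]; field_simp; ring
  have hB2 : upred 2 1 = (1 + γ + γ ^ 2 * β) / (1 - γ ^ 3) := by
    rw [hval]; simp [hM, hε]; field_simp; ring
  have hu : ∀ j : Fin 3, ureal j = (β + γ + γ ^ 2) / (1 - γ ^ 3) := fun j => by
    rw [hureal, hA]
  intro i
  have key : J3 P (ε i) i ureal - J3 P (ε i) i (upred i) =
      γ * (γ ^ 2 + γ + β) * (1 - β) * (1 - γ ^ 2) / (1 - γ ^ 3) ^ 2 := by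
    fin_cases i <;>
    · simp only [J3, hP, Matrix.mulVec, dotProduct, Fin.sum_univ_three]
      rw [hε]
      simp only [Matrix.cons_val', Matrix.cons_val_zero, Matrix.cons_val_one, Matrix.head_cons,
        Matrix.empty_val', Matrix.cons_val_fin_one, Matrix.cons_val_two, Matrix.tail_cons]
      norm_num
      simp only [show ((⟨2, by omega⟩ : Fin 3)) = 2 from rfl, hu, hA, hB0, hB1, hB2, Matrix.cons_val]
      field_simp
      ring
  refine ⟨key, ?_⟩
  rw [key]
  have h2 : (0:ℝ) < 1 - γ ^ 2 := by nlinarith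
  have h3 : (0:ℝ) < 1 - β := by linarith
  have h4 : (0:ℝ) < γ ^ 2 + γ + β := by positivity
  have h5 : (0:ℝ) < 1 - γ ^ 3 := by nlinarith
  positivity
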